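/- Let P be an N×N real row-stochastic irreducible matrix, and let π ∈ ℝ^N be a stationary distribution of P, i.e., π has strictly positive entries, πᵀP = πᵀ, and Σ_i π_i = 1. Then for every initial matrix H₀ ∈ ℝ^{N×m}, the trajectory H(t) = exp(−t(I − P)) H₀ of the directed consensus flow dH/dt = −(I − P)H converges as t → ∞ to the rank-one consensus state 𝟏(πᵀH₀), where 𝟏 ∈ ℝ^N is the all-ones vector. -/

import Mathlib

open Matrix BigOperators Filter Topology
open scoped Nat

namespace ConsensusTrapAux

variable {N : ℕ}

/-- The exponential series has sum `exp A`, stated for the default (pi) topology on matrices. -/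
lemma hasSum_exp (A : Matrix (Fin N) (Fin N) ℝ) :
    HasSum (fun n : ℕ => (n ! : ℝ)⁻¹ • A ^ n) (NormedSpace.exp A) := by
  letI : SeminormedRing (Matrix (Fin N) (Fin N) ℝ) := Matrix.linftyOpSemiNormedRing
  letI : NormedRing (Matrix (Fin N) (Fin N) ℝ) := Matrix.linftyOpNormedRing
  letI : NormedAlgebra ℝ (Matrix (Fin N) (Fin N) ℝ) := Matrix.linftyOpNormedAlgebra
  exact NormedSpace.exp_series_hasSum_exp' (𝕂 := ℝ) A

lemma hasSum_exp_entry (A : Matrix (Fin N) (Fin N) ℝ) (i j : Fin N) :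
    HasSum (fun n : ℕ => (n ! : ℝ)⁻¹ * (A ^ n) i j) ((NormedSpace.exp A) i j) := by
  have h := (hasSum_exp A).map
      (AddMonoidHom.mk' (fun B : Matrix (Fin N) (Fin N) ℝ => B i j) (fun B C => rfl))
      ((continuous_id : Continuous fun B : Matrix (Fin N) (Fin N) ℝ => B).matrix_elem i j)
  exact h

lemma vecMul_smul_mat (c : ℝ) (A : Matrix (Fin N) (Fin N) ℝ) (x : Fin N → ℝ) :
    x ᵥ* (c • A) = c • (x ᵥ* A) := by
  funext j
  simp only [Matrix.vecMul, dotProduct, Matrix.smul_apply, Pi.smul_apply, smul_eq_mul,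
    Finset.mul_sum]
  exact Finset.sum_congr rfl fun i _ => by ring

lemma hasSum_exp_vecMul (A : Matrix (Fin N) (Fin N) ℝ) (x : Fin N → ℝ) :
    HasSum (fun n : ℕ => (n ! : ℝ)⁻¹ • (x ᵥ* A ^ n)) (x ᵥ* NormedSpace.exp A) := by
  have h := (hasSum_exp A).map
      (AddMonoidHom.mk' (fun B : Matrix (Fin N) (Fin N) ℝ => x ᵥ* B)
        (fun B C => Matrix.vecMul_add B C x))
      ((continuous_const (y := x)).matrix_vecMul continuous_id)
  simpa [Function.comp_def, vecMul_smul_mat] using h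

lemma hasSum_exp_mulVec (A : Matrix (Fin N) (Fin N) ℝ) (x : Fin N → ℝ) :
    HasSum (fun n : ℕ => (n ! : ℝ)⁻¹ • (A ^ n *ᵥ x)) (NormedSpace.exp A *ᵥ x) := by
  have h := (hasSum_exp A).map
      (AddMonoidHom.mk' (fun B : Matrix (Fin N) (Fin N) ℝ => B *ᵥ x)
        (fun B C => Matrix.add_mulVec B C x))
      (continuous_id.matrix_mulVec (continuous_const (y := x)))
  simpa [Function.comp_def, smul_mulVec] using h

/-- If `x ᵥ* B = 0` then `x` is invariant under `exp B`. -/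
lemma vecMul_exp_of_vecMul_eq_zero (B : Matrix (Fin N) (Fin N) ℝ) (x : Fin N → ℝ)
    (hx : x ᵥ* B = 0) : x ᵥ* NormedSpace.exp B = x := by
  have h := hasSum_exp_vecMul B x
  have h0 : ∀ n : ℕ, n ≠ 0 → (n ! : ℝ)⁻¹ • (x ᵥ* B ^ n) = 0 := by
    intro n hn
    obtain ⟨m, rfl⟩ := Nat.exists_eq_succ_of_ne_zero hn
    have hz : x ᵥ* B ^ (m + 1) = 0 := by
      rw [pow_succ', ← Matrix.vecMul_vecMul, hx, Matrix.zero_vecMul]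
    rw [hz, smul_zero]
  have h1 : HasSum (fun n : ℕ => (n ! : ℝ)⁻¹ • (x ᵥ* B ^ n)) x := by
    have := hasSum_single (f := fun n : ℕ => (n ! : ℝ)⁻¹ • (x ᵥ* B ^ n)) 0 h0
    simpa [Matrix.vecMul_one] using this
  exact h.unique h1

/-- If `B *ᵥ x = 0` then `x` is invariant under `exp B`. -/
lemma exp_mulVec_of_mulVec_eq_zero (B : Matrix (Fin N) (Fin N) ℝ) (x : Fin N → ℝ)
    (hx : B *ᵥ x = 0) : NormedSpace.exp B *ᵥ x = x := by
  have h := hasSum_exp_mulVec B x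
  have h0 : ∀ n : ℕ, n ≠ 0 → (n ! : ℝ)⁻¹ • (B ^ n *ᵥ x) = 0 := by
    intro n hn
    obtain ⟨m, rfl⟩ := Nat.exists_eq_succ_of_ne_zero hn
    have hz : B ^ (m + 1) *ᵥ x = 0 := by
      rw [pow_succ, ← Matrix.mulVec_mulVec, hx, Matrix.mulVec_zero]
    rw [hz, smul_zero]
  have h1 : HasSum (fun n : ℕ => (n ! : ℝ)⁻¹ • (B ^ n *ᵥ x)) x := by
    have := hasSum_single (f := fun n : ℕ => (n ! : ℝ)⁻¹ • (B ^ n *ᵥ x)) 0 h0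
    simpa [Matrix.one_mulVec] using this
  exact h.unique h1

lemma pow_entry_nonneg {P : Matrix (Fin N) (Fin N) ℝ} (h : ∀ i j, 0 ≤ P i j) (n : ℕ) :
    ∀ i j, 0 ≤ (P ^ n) i j := by
  induction n with
  | zero =>
      intro i j
      by_cases hij : i = j <;> simp [pow_zero, Matrix.one_apply, hij]
  | succ m ih =>
      intro i j
      rw [pow_succ, Matrix.mul_apply]
      exact Finset.sum_nonneg fun l _ => mul_nonneg (ih i l) (h l j)

/-- Doeblin-type upper bound. -/
lemma mulVec_le_sup (hne : (Finset.univ : Finset (Fin N)).Nonempty)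
    (M : Matrix (Fin N) (Fin N) ℝ) (ε : ℝ) (hε0 : 0 ≤ ε) (hε : ∀ i j, ε ≤ M i j)
    (hrow : ∀ i, ∑ j, M i j = 1) (v : Fin N → ℝ) (i : Fin N) :
    (M *ᵥ v) i ≤ Finset.univ.sup' hne v
      - ε * (Finset.univ.sup' hne v - Finset.univ.inf' hne v) := by
  set S := Finset.univ.sup' hne v with hS
  set I := Finset.univ.inf' hne v with hI
  obtain ⟨j₀, -, hj₀⟩ := Finset.exists_mem_eq_inf' hne v
  have hvI : ∀ j, I ≤ v j := fun j => Finset.inf'_le v (Finset.mem_univ j)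
  have hvS : ∀ j, v j ≤ S := fun j => Finset.le_sup' v (Finset.mem_univ j)
  have hSI : I ≤ S := le_trans (hvI j₀) (hvS j₀)
  have hMnn : ∀ j, (0:ℝ) ≤ M i j := fun j => le_trans hε0 (hε i j)
  have hmv : (M *ᵥ v) i = ∑ j, M i j * v j := by
    simp [Matrix.mulVec, dotProduct]
  have hsplit : ∑ j ∈ Finset.univ.erase j₀, M i j * (v j - I) + M i j₀ * (v j₀ - I)
      = ∑ j, M i j * (v j - I) := Finset.sum_erase_add _ _ (Finset.mem_univ j₀)
  have hz : M i j₀ * (v j₀ - I) = 0 := by rw [← hj₀]; ring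
  have hb : ∑ j ∈ Finset.univ.erase j₀, M i j * (v j - I)
      ≤ ∑ j ∈ Finset.univ.erase j₀, M i j * (S - I) :=
    Finset.sum_le_sum fun j _ =>
      mul_le_mul_of_nonneg_left (by linarith [hvS j]) (hMnn j)
  have hrow' : ∑ j ∈ Finset.univ.erase j₀, M i j = 1 - M i j₀ := by
    have := Finset.sum_erase_add Finset.univ (fun j => M i j) (Finset.mem_univ j₀)
    rw [hrow i] at this
    linarith
  have hc : ∑ j ∈ Finset.univ.erase j₀, M i j * (S - I) = (1 - M i j₀) * (S - I) := by
    rw [← Finset.sum_mul, hrow']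
  have hd : (1 - M i j₀) * (S - I) ≤ (1 - ε) * (S - I) :=
    mul_le_mul_of_nonneg_right (by linarith [hε i j₀]) (by linarith)
  have key : ∑ j, M i j * (v j - I) ≤ (1 - ε) * (S - I) := by
    rw [← hsplit, hz, add_zero]
    calc _ ≤ ∑ j ∈ Finset.univ.erase j₀, M i j * (S - I) := hb
    _ = (1 - M i j₀) * (S - I) := hc
    _ ≤ (1 - ε) * (S - I) := hd
  have hsum : ∑ j, M i j * (v j - I) = (∑ j, M i j * v j) - I := by
    simp only [mul_sub]
    rw [Finset.sum_sub_distrib, ← Finset.sum_mul, hrow i, one_mul]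
  have hring : S - ε * (S - I) = (1 - ε) * (S - I) + I := by ring
  rw [hmv, hring]
  linarith
/-- Doeblin-type lower bound. -/
lemma inf_le_mulVec (hne : (Finset.univ : Finset (Fin N)).Nonempty)
    (M : Matrix (Fin N) (Fin N) ℝ) (ε : ℝ) (hε0 : 0 ≤ ε) (hε : ∀ i j, ε ≤ M i j)
    (hrow : ∀ i, ∑ j, M i j = 1) (v : Fin N → ℝ) (i : Fin N) :
    Finset.univ.inf' hne v
      + ε * (Finset.univ.sup' hne v - Finset.univ.inf' hne v) ≤ (M *ᵥ v) i := by
  set S := Finset.univ.sup' hne v with hS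
  set I := Finset.univ.inf' hne v with hI
  obtain ⟨j₁, -, hj₁⟩ := Finset.exists_mem_eq_sup' hne v
  have hvI : ∀ j, I ≤ v j := fun j => Finset.inf'_le v (Finset.mem_univ j)
  have hvS : ∀ j, v j ≤ S := fun j => Finset.le_sup' v (Finset.mem_univ j)
  have hSI : I ≤ S := le_trans (hvI j₁) (hvS j₁)
  have hMnn : ∀ j, (0:ℝ) ≤ M i j := fun j => le_trans hε0 (hε i j)
  have hmv : (M *ᵥ v) i = ∑ j, M i j * v j := by
    simp [Matrix.mulVec, dotProduct]
  have hsplit : ∑ j ∈ Finset.univ.erase j₁, M i j * (S - v j) + M i j₁ * (S - v j₁)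
      = ∑ j, M i j * (S - v j) := Finset.sum_erase_add _ _ (Finset.mem_univ j₁)
  have hz : M i j₁ * (S - v j₁) = 0 := by rw [← hj₁]; ring
  have hb : ∑ j ∈ Finset.univ.erase j₁, M i j * (S - v j)
      ≤ ∑ j ∈ Finset.univ.erase j₁, M i j * (S - I) :=
    Finset.sum_le_sum fun j _ =>
      mul_le_mul_of_nonneg_left (by linarith [hvI j]) (hMnn j)
  have hrow' : ∑ j ∈ Finset.univ.erase j₁, M i j = 1 - M i j₁ := by
    have := Finset.sum_erase_add Finset.univ (fun j => M i j) (Finset.mem_univ j₁)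
    rw [hrow i] at this
    linarith
  have hc : ∑ j ∈ Finset.univ.erase j₁, M i j * (S - I) = (1 - M i j₁) * (S - I) := by
    rw [← Finset.sum_mul, hrow']
  have hd : (1 - M i j₁) * (S - I) ≤ (1 - ε) * (S - I) :=
    mul_le_mul_of_nonneg_right (by linarith [hε i j₁]) (by linarith)
  have key : ∑ j, M i j * (S - v j) ≤ (1 - ε) * (S - I) := by
    rw [← hsplit, hz, add_zero]
    calc _ ≤ ∑ j ∈ Finset.univ.erase j₁, M i j * (S - I) := hb
    _ = (1 - M i j₁) * (S - I) := hc
    _ ≤ (1 - ε) * (S - I) := hd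
  have hsum : ∑ j, M i j * (S - v j) = S - ∑ j, M i j * v j := by
    simp only [mul_sub]
    rw [Finset.sum_sub_distrib, ← Finset.sum_mul, hrow i, one_mul]
  have hring : I + ε * (S - I) = S - (1 - ε) * (S - I) := by ring
  rw [hmv, hring]
  linarith

end ConsensusTrapAux

open ConsensusTrapAux in
/-- **Consensus trap under irreducible positive mixing (convergence part).**
If `P` is row-stochastic and irreducible and `π` is a stationary distribution of `P`
(strictly positive entries, `πᵀP = πᵀ`, `∑ π i = 1`), then for every initial
matrix `H₀ ∈ ℝ^{N×m}` the trajectory `H(t) = exp(−t(I−P)) H₀` of the consensus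
flow `dH/dt = −(I−P)H` converges as `t → ∞` to the rank-one state `𝟏 (πᵀ H₀)`. -/
theorem consensus_flow_converges_to_rank_one
    (N m : ℕ) (P : Matrix (Fin N) (Fin N) ℝ)
    (hnonneg : ∀ i j, 0 ≤ P i j)
    (hrow : ∀ i, ∑ j, P i j = 1)
    (hirr : ∀ i j, ∃ k : ℕ, 0 < k ∧ 0 < (P ^ k) i j)
    (π : Fin N → ℝ)
    (hπpos : ∀ i, 0 < π i)
    (hπstat : Matrix.vecMul π P = π)
    (hπsum : ∑ i, π i = 1)
    (H₀ : Matrix (Fin N) (Fin m) ℝ) :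
    Tendsto (fun t : ℝ => (NormedSpace.exp (-(t • ((1 : Matrix (Fin N) (Fin N) ℝ) - P)))) * H₀)
      atTop
      (𝓝 (Matrix.of fun (_ : Fin N) (k : Fin m) => ∑ j, π j * H₀ j k)) := by
  classical
  have hN : 0 < N := by
    rcases Nat.eq_zero_or_pos N with h | h
    · subst h; simp at hπsum
    · exact h
  haveI : Nonempty (Fin N) := ⟨⟨0, hN⟩⟩
  have hne : (Finset.univ : Finset (Fin N)).Nonempty := Finset.univ_nonempty
  set M : Matrix (Fin N) (Fin N) ℝ := 1 - P with hM
  set S : ℝ → Matrix (Fin N) (Fin N) ℝ := fun t => NormedSpace.exp (-(t • M)) with hSdef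
  -- π is invariant under the flow
  have hπM : π ᵥ* M = 0 := by
    rw [hM, Matrix.vecMul_sub, Matrix.vecMul_one, hπstat, sub_self]
  have hπS : ∀ t : ℝ, π ᵥ* S t = π := by
    intro t
    apply vecMul_exp_of_vecMul_eq_zero
    rw [Matrix.vecMul_neg, vecMul_smul_mat, hπM, smul_zero, neg_zero]
  -- rows of `S t` sum to 1
  have hPones : P *ᵥ (fun _ => (1:ℝ)) = (fun _ => (1:ℝ)) := by
    funext i
    simp [Matrix.mulVec, dotProduct, hrow i]
  have hones : M *ᵥ (fun _ => (1:ℝ)) = 0 := by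
    rw [hM, Matrix.sub_mulVec, Matrix.one_mulVec, hPones, sub_self]
  have hSones : ∀ t : ℝ, S t *ᵥ (fun _ => (1:ℝ)) = (fun _ => (1:ℝ)) := by
    intro t
    apply exp_mulVec_of_mulVec_eq_zero
    rw [Matrix.neg_mulVec, smul_mulVec, hones, smul_zero, neg_zero]
  have hrowS : ∀ (t : ℝ) (i : Fin N), ∑ j, S t i j = 1 := by
    intro t i
    have := congrFun (hSones t) i
    simpa [Matrix.mulVec, dotProduct] using this
  -- decomposition S t = exp (-t) • exp (t • P)
  have hdec : ∀ t : ℝ, S t = Real.exp (-t) • NormedSpace.exp (t • P) := by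
    intro t
    have hsplit : -(t • M) = (-t) • (1 : Matrix (Fin N) (Fin N) ℝ) + t • P := by
      rw [hM]; module
    have hcomm : Commute ((-t) • (1 : Matrix (Fin N) (Fin N) ℝ)) (t • P) :=
      ((Commute.one_left (t • P)).smul_left (-t))
    have h1 : ((-t) • (1 : Matrix (Fin N) (Fin N) ℝ)) = Matrix.diagonal (fun _ => -t) := by
      ext i j; by_cases h : i = j <;> simp [Matrix.one_apply, h]
    have h2 : (NormedSpace.exp fun _ : Fin N => -t) = fun _ : Fin N => Real.exp (-t) := by
      rw [Pi.exp_def]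
      funext i
      rw [Real.exp_eq_exp_ℝ]
    have h3 : Matrix.diagonal (fun _ : Fin N => Real.exp (-t))
        = Real.exp (-t) • (1 : Matrix (Fin N) (Fin N) ℝ) := by
      ext i j; by_cases h : i = j <;> simp [Matrix.one_apply, h]
    show NormedSpace.exp (-(t • M)) = _
    rw [hsplit, Matrix.exp_add_of_commute _ _ hcomm, h1, Matrix.exp_diagonal, h2, h3,
      smul_mul_assoc, one_mul]
  have hentry : ∀ (t : ℝ) (i j : Fin N),
      S t i j = Real.exp (-t) * (NormedSpace.exp (t • P)) i j := by
    intro t i j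
    rw [hdec t]
    simp
  -- entries of S t are nonnegative for t ≥ 0
  have hSnn : ∀ t : ℝ, 0 ≤ t → ∀ i j, 0 ≤ S t i j := by
    intro t ht i j
    have hterm : ∀ n : ℕ, (0:ℝ) ≤ (n ! : ℝ)⁻¹ * ((t • P) ^ n) i j := by
      intro n
      have he : ((t • P) ^ n) i j = t ^ n * (P ^ n) i j := by
        rw [smul_pow]; simp
      rw [he]
      exact mul_nonneg (by positivity)
        (mul_nonneg (pow_nonneg ht n) (pow_entry_nonneg hnonneg n i j))
    have h0 : (0:ℝ) ≤ (NormedSpace.exp (t • P)) i j :=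
      hasSum_le (fun n => hterm n) hasSum_zero (hasSum_exp_entry (t • P) i j)
    rw [hentry t i j]
    exact mul_nonneg (Real.exp_pos _).le h0
  -- entries of S 1 are positive
  have hSpos1 : ∀ i j, 0 < S 1 i j := by
    intro i j
    obtain ⟨k, hk0, hkpos⟩ := hirr i j
    have hsum := hasSum_exp_entry ((1:ℝ) • P) i j
    rw [one_smul] at hsum
    have hge : (k ! : ℝ)⁻¹ * (P ^ k) i j ≤ (NormedSpace.exp P) i j :=
      le_hasSum hsum k
        (fun n _ => mul_nonneg (by positivity) (pow_entry_nonneg hnonneg n i j))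
    have hlt : (0:ℝ) < (NormedSpace.exp P) i j :=
      lt_of_lt_of_le (by positivity) hge
    rw [hentry 1 i j, one_smul]
    exact mul_pos (Real.exp_pos _) hlt
  -- semigroup property
  have hsg : ∀ s t : ℝ, S (s + t) = S s * S t := by
    intro s t
    have hadd : -((s + t) • M) = -(s • M) + -(t • M) := by module
    have hcomm' : Commute (-(s • M)) (-(t • M)) :=
      ((((Commute.refl M).smul_left s).smul_right t).neg_left).neg_right
    show NormedSpace.exp (-((s + t) • M)) = _
    rw [hadd, Matrix.exp_add_of_commute _ _ hcomm']
  have hS0 : S 0 = 1 := by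
    show NormedSpace.exp (-((0:ℝ) • M)) = 1
    rw [zero_smul, neg_zero, NormedSpace.exp_zero]
  have hSpow : ∀ n : ℕ, S (n : ℝ) = S 1 ^ n := by
    intro n
    induction n with
    | zero => simpa using hS0
    | succ k ih =>
        have hc : ((k + 1 : ℕ) : ℝ) = (k : ℝ) + 1 := by push_cast; ring
        rw [hc, hsg (k : ℝ) 1, ih, pow_succ]
  -- the Doeblin parameter
  have hne2 : (Finset.univ : Finset (Fin N × Fin N)).Nonempty := Finset.univ_nonempty
  set δ : ℝ := Finset.univ.inf' hne2 (fun p : Fin N × Fin N => S 1 p.1 p.2) with hδ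
  have hδpos : 0 < δ := by
    obtain ⟨p, -, hp⟩ := Finset.exists_mem_eq_inf' hne2 (fun p : Fin N × Fin N => S 1 p.1 p.2)
    rw [hδ, hp]
    exact hSpos1 p.1 p.2
  set ε : ℝ := min δ (1/2 : ℝ) with hε
  have hεpos : 0 < ε := lt_min hδpos (by norm_num)
  have hεle : ∀ i j, ε ≤ S 1 i j := fun i j =>
    le_trans (min_le_left _ _) (Finset.inf'_le _ (Finset.mem_univ (i, j)))
  set r : ℝ := 1 - 2 * ε with hr
  have hεhalf : ε ≤ 1/2 := min_le_right _ _
  have hr0 : 0 ≤ r := by rw [hr]; linarith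
  have hr1 : r < 1 := by rw [hr]; linarith
  -- oscillation contraction
  set osc : (Fin N → ℝ) → ℝ :=
    fun v => Finset.univ.sup' hne v - Finset.univ.inf' hne v with hosc
  have hcontract : ∀ (n : ℕ) (v : Fin N → ℝ), osc (S 1 ^ n *ᵥ v) ≤ r ^ n * osc v := by
    intro n
    induction n with
    | zero => intro v; simp [Matrix.one_mulVec]
    | succ k ih =>
        intro v
        have hosc0 : 0 ≤ osc v := by
          rw [hosc]
          simp only [sub_nonneg]
          exact le_trans (Finset.inf'_le v (Finset.mem_univ ⟨0, hN⟩))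
            (Finset.le_sup' v (Finset.mem_univ ⟨0, hN⟩))
        have hstep : ∀ w : Fin N → ℝ, osc (S 1 *ᵥ w) ≤ r * osc w := by
          intro w
          have up : Finset.univ.sup' hne (S 1 *ᵥ w)
              ≤ Finset.univ.sup' hne w - ε * (Finset.univ.sup' hne w - Finset.univ.inf' hne w) :=
            Finset.sup'_le hne _ fun i _ =>
              mulVec_le_sup hne (S 1) ε hεpos.le hεle (hrowS 1) w i
          have lo : Finset.univ.inf' hne w + ε * (Finset.univ.sup' hne w - Finset.univ.inf' hne w)
              ≤ Finset.univ.inf' hne (S 1 *ᵥ w) :=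
            Finset.le_inf' hne _ fun i _ =>
              inf_le_mulVec hne (S 1) ε hεpos.le hεle (hrowS 1) w i
          rw [hosc, hr]
          have : (1 - 2 * ε) * (Finset.univ.sup' hne w - Finset.univ.inf' hne w)
              = (Finset.univ.sup' hne w - Finset.univ.inf' hne w)
                - 2 * (ε * (Finset.univ.sup' hne w - Finset.univ.inf' hne w)) := by ring
          rw [this]
          dsimp only
          linarith
        calc osc (S 1 ^ (k+1) *ᵥ v) = osc (S 1 *ᵥ (S 1 ^ k *ᵥ v)) := by
              rw [Matrix.mulVec_mulVec, ← pow_succ']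
          _ ≤ r * osc (S 1 ^ k *ᵥ v) := hstep _
          _ ≤ r * (r ^ k * osc v) := mul_le_mul_of_nonneg_left (ih v) hr0
          _ = r ^ (k+1) * osc v := by ring
  -- entrywise convergence
  rw [show (fun t : ℝ =>
        (NormedSpace.exp (-(t • ((1 : Matrix (Fin N) (Fin N) ℝ) - P)))) * H₀)
      = fun t : ℝ => S t * H₀ from rfl]
  refine tendsto_pi_nhds.mpr fun i => tendsto_pi_nhds.mpr fun k => ?_
  set v : Fin N → ℝ := fun j => H₀ j k with hv
  set c : ℝ := ∑ j, π j * v j with hc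
  have hosc0 : 0 ≤ osc v := by
    rw [hosc]
    simp only [sub_nonneg]
    exact le_trans (Finset.inf'_le v (Finset.mem_univ ⟨0, hN⟩))
      (Finset.le_sup' v (Finset.mem_univ ⟨0, hN⟩))
  have key : ∀ t : ℝ, 0 ≤ t → |(S t *ᵥ v) i - c| ≤ r ^ ⌊t⌋₊ * osc v := by
    intro t ht
    set n : ℕ := ⌊t⌋₊ with hn
    have hnle : (n : ℝ) ≤ t := Nat.floor_le ht
    have hst : t - n + n = t := by ring
    have hdecomp : S t = S (t - n) * S (n : ℝ) := by
      rw [← hsg (t - n) (n : ℝ), hst]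
    set w : Fin N → ℝ := S (n : ℝ) *ᵥ v with hw
    have hu : S t *ᵥ v = S (t - n) *ᵥ w := by
      rw [hdecomp, hw, Matrix.mulVec_mulVec]
    have hnneg : ∀ i' j', 0 ≤ S (t - n) i' j' := hSnn (t - n) (by linarith)
    have hup : (S (t - n) *ᵥ w) i ≤ Finset.univ.sup' hne w := by
      have := mulVec_le_sup hne (S (t - n)) 0 le_rfl (fun i' j' => hnneg i' j')
        (hrowS (t - n)) w i
      simpa using this
    have hlo : Finset.univ.inf' hne w ≤ (S (t - n) *ᵥ w) i := by
      have := inf_le_mulVec hne (S (t - n)) 0 le_rfl (fun i' j' => hnneg i' j')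
        (hrowS (t - n)) w i
      simpa using this
    have hcw : c = ∑ j, π j * w j := by
      have h1 : π ᵥ* S (n : ℝ) = π := hπS (n : ℝ)
      calc c = π ⬝ᵥ v := by rw [hc]; simp [dotProduct]
        _ = (π ᵥ* S (n : ℝ)) ⬝ᵥ v := by rw [h1]
        _ = π ⬝ᵥ (S (n : ℝ) *ᵥ v) := (dotProduct_mulVec π (S (n : ℝ)) v).symm
        _ = ∑ j, π j * w j := by rw [hw]; simp [dotProduct]
    have hclo : Finset.univ.inf' hne w ≤ c := by
      rw [hcw]
      calc Finset.univ.inf' hne w = ∑ j, π j * Finset.univ.inf' hne w := by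
            rw [← Finset.sum_mul, hπsum, one_mul]
        _ ≤ ∑ j, π j * w j :=
            Finset.sum_le_sum fun j _ =>
              mul_le_mul_of_nonneg_left (Finset.inf'_le w (Finset.mem_univ j)) (hπpos j).le
    have hchi : c ≤ Finset.univ.sup' hne w := by
      rw [hcw]
      calc ∑ j, π j * w j ≤ ∑ j, π j * Finset.univ.sup' hne w :=
            Finset.sum_le_sum fun j _ =>
              mul_le_mul_of_nonneg_left (Finset.le_sup' w (Finset.mem_univ j)) (hπpos j).le
        _ = Finset.univ.sup' hne w := by rw [← Finset.sum_mul, hπsum, one_mul]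
    have hoscw : Finset.univ.sup' hne w - Finset.univ.inf' hne w ≤ r ^ n * osc v := by
      have := hcontract n v
      rw [hosc] at this
      rw [hw, hSpow n]
      exact this
    rw [hu, abs_le]
    constructor
    · linarith
    · linarith
  have hlim : Tendsto (fun t : ℝ => r ^ ⌊t⌋₊ * osc v) atTop (𝓝 0) := by
    have h1 : Tendsto (fun n : ℕ => r ^ n) atTop (𝓝 0) :=
      tendsto_pow_atTop_nhds_zero_of_lt_one hr0 hr1
    have h2 := (h1.comp (tendsto_nat_floor_atTop (α := ℝ))).mul_const (osc v)
    simpa [Function.comp_def] using h2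
  have habs : Tendsto (fun t : ℝ => |(S t *ᵥ v) i - c|) atTop (𝓝 0) :=
    squeeze_zero' (Eventually.of_forall fun t => abs_nonneg _)
      ((eventually_ge_atTop (0:ℝ)).mono fun t ht => key t ht) hlim
  have hfinal : Tendsto (fun t : ℝ => (S t *ᵥ v) i) atTop (𝓝 c) := by
    rw [tendsto_iff_dist_tendsto_zero]
    simpa [Real.dist_eq] using habs
  have heq : ∀ t : ℝ, (S t *ᵥ v) i = (S t * H₀) i k := by
    intro t
    simp [Matrix.mul_apply, Matrix.mulVec, dotProduct, hv]
  have hgoal : (Matrix.of fun (_ : Fin N) (k : Fin m) => ∑ j, π j * H₀ j k) i k = c := by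
    rw [hc, hv]
    simp
  rw [hgoal]
  exact hfinal.congr heq
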